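/- arXiv:2009.09952 — 6 statements merged into one kernel-verified Lean document; each statement's English description precedes it below -/
import Mathlib

section
/- Let G be a topological group and P ≤ G a closed subgroup. Assume that for every g ∈ G the pair (P, P ∩ gPg⁻¹) has the Mautner property, and that every intermediate closed subgroup P ≤ Q ≤ G equals its own normalizer in G (P is stably self-normalizing). Then the pair (G,P) has the Mautner property: in any continuous isometric action of G on a metric space, every P-fixed point is G-fixed. -/
/-- The pair `(P, A)` has the Mautner property: in every continuous isometric action of the
subgroup `P` (with its induced topology) on a metric space, every point fixed by all elements
of `P` that lie in `A` is fixed by all of `P`. -/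
def MautnerPair {G : Type*} [Group G] [TopologicalSpace G] (P A : Subgroup G) : Prop :=
  ∀ (X : Type) [MetricSpace X] (φ : P →* (X ≃ᵢ X)),
    Continuous (fun q : P × X => φ q.1 q.2) →
    ∀ x : X, (∀ a : P, (a : G) ∈ A → φ a x = x) → ∀ p : P, φ p x = x

/-- if P is a closed subgroup of G such that (P, P ∩ gPg⁻¹) has the Mautner
property for every g ∈ G, and P is stably self-normalizing (every intermediate closed
subgroup is its own normalizer), then the pair (G, P) has the Mautner property. -/
theorem mautner_of_relative_mautner_of_stably_self_normalizing
    {G : Type*} [Group G] [TopologicalSpace G] [IsTopologicalGroup G]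
    (P : Subgroup G) (hPclosed : IsClosed (P : Set G))
    (hrel : ∀ g : G, MautnerPair P (P ⊓ Subgroup.map (MulAut.conj g).toMonoidHom P))
    (hsn : ∀ Q : Subgroup G, P ≤ Q → IsClosed (Q : Set G) → Subgroup.normalizer (Q : Set G) = Q) :
    ∀ (X : Type) [MetricSpace X] (φ : G →* (X ≃ᵢ X)),
      Continuous (fun q : G × X => φ q.1 q.2) →
      ∀ x : X, (∀ p ∈ P, φ p x = x) → ∀ g : G, φ g x = x := by
  intro X _ φ hcont x hPfix g
  set Q : Subgroup G :=
    { carrier := {g | φ g x = x}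
      one_mem' := by simp
      mul_mem' := by
        intro a b ha hb
        simp only [Set.mem_setOf_eq] at *
        rw [map_mul, IsometryEquiv.mul_apply, hb, ha]
      inv_mem' := by
        intro a ha
        simp only [Set.mem_setOf_eq] at *
        conv_lhs => rw [← ha]
        rw [← IsometryEquiv.mul_apply, ← map_mul]
        simp } with hQdef
  have hQclosed : IsClosed (Q : Set G) := by
    have h1 : Continuous fun g : G => φ g x :=
      hcont.comp (continuous_id.prodMk continuous_const)
    exact isClosed_eq h1 continuous_const
  -- every conjugate of P fixes x
  have hconj : ∀ h : G, ∀ p ∈ P, h * p * h⁻¹ ∈ Q := by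
    intro h p hp
    have contP : Continuous (fun q : P × X => (φ.comp P.subtype) q.1 q.2) :=
      hcont.comp ((continuous_subtype_val.comp continuous_fst).prodMk continuous_snd)
    have key := hrel h⁻¹ X (φ.comp P.subtype) contP (φ h⁻¹ x) ?_ ⟨p, hp⟩
    · show φ (h * p * h⁻¹) x = x
      have : φ p (φ h⁻¹ x) = φ h⁻¹ x := key
      calc φ (h * p * h⁻¹) x = φ h (φ p (φ h⁻¹ x)) := by
            simp [map_mul, IsometryEquiv.mul_apply]
        _ = φ h (φ h⁻¹ x) := by rw [this]
        _ = x := by rw [← IsometryEquiv.mul_apply, ← map_mul]; simp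
    · rintro ⟨a, haP⟩ ⟨-, q, hqP, rfl⟩
      show φ ((MulAut.conj h⁻¹) q) (φ h⁻¹ x) = φ h⁻¹ x
      have : (MulAut.conj h⁻¹) q = h⁻¹ * q * h := by simp [MulAut.conj_apply]
      rw [this]
      calc φ (h⁻¹ * q * h) (φ h⁻¹ x) = φ (h⁻¹ * q * h * h⁻¹) x := by
            rw [← IsometryEquiv.mul_apply, ← map_mul]
        _ = φ h⁻¹ (φ q x) := by
            rw [mul_assoc, mul_inv_cancel, mul_one, map_mul, IsometryEquiv.mul_apply]
        _ = φ h⁻¹ x := by rw [hPfix q hqP]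
  have hNC : Subgroup.normalClosure (P : Set G) ≤ Q := by
    rw [Subgroup.normalClosure, Subgroup.closure_le]
    intro y hy
    rcases Group.mem_conjugatesOfSet_iff.1 hy with ⟨a, haP, hconj'⟩
    rcases isConj_iff.1 hconj' with ⟨c, rfl⟩
    exact hconj c a haP
  have hnormal : (Subgroup.normalClosure (P : Set G)).Normal := Subgroup.normalClosure_normal
  set R := (Subgroup.normalClosure (P : Set G)).topologicalClosure with hRdef
  have hRnormal : R.Normal := Subgroup.is_normal_topologicalClosure _
  have hPR : P ≤ R :=
    le_trans (le_trans Subgroup.subset_normalClosure (le_refl _) : P ≤ Subgroup.normalClosure (P : Set G))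
      (Subgroup.le_topologicalClosure _)
  have hRtop : R = ⊤ := by
    rw [← hsn R hPR (Subgroup.isClosed_topologicalClosure _)]
    exact Subgroup.normalizer_eq_top_iff.2 hRnormal
  have hRQ : R ≤ Q := Subgroup.topologicalClosure_minimal _ hNC hQclosed
  have : g ∈ Q := hRQ (hRtop ▸ Subgroup.mem_top g)
  exact this
end

section
/- Let Γ be a countable discrete group and let ψ be a state on the full group C*-algebra C*(Γ) (equivalently, a normalized positive definite function on Γ). If for every g ∈ Γ \ {e} the state ψ and its translate g·ψ (defined by (g·ψ)(x) = ψ(u_g* x u_g)) satisfy ‖ψ − g·ψ‖ = 2 (i.e. they are singular), then ψ(u_g) = 0 for every g ≠ e; in particular ψ is the canonical regular trace δ_e. -/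
open scoped ComplexOrder

section Helpers

variable {A : Type*} [NormedRing A] [StarRing A] [CStarRing A] [NormedAlgebra ℂ A]
  [CompleteSpace A] [StarModule ℂ A]
  (ψ : A →L[ℂ] ℂ) (hψpos : ∀ a : A, 0 ≤ ψ (star a * a))

set_option linter.unusedSectionVars false

include hψpos

private lemma psi_herm (x y : A) :
    ψ (star y * x) = (starRingEnd ℂ) (ψ (star x * y)) := by
  have him : ∀ z : A, (ψ (star z * z)).im = 0 := fun z =>
    ((Complex.nonneg_iff.mp (hψpos z)).2).symm
  have e1 : ψ (star (x + y) * (x + y)) =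
      ψ (star x * x) + ψ (star x * y) + ψ (star y * x) + ψ (star y * y) := by
    simp only [star_add, add_mul, mul_add, map_add]; ring
  have e2 : ψ (star (x + Complex.I • y) * (x + Complex.I • y)) =
      ψ (star x * x) + Complex.I * ψ (star x * y) - Complex.I * ψ (star y * x)
        + ψ (star y * y) := by
    simp only [star_add, star_smul, add_mul, mul_add, smul_mul_assoc, mul_smul_comm,
      map_add, map_smul, smul_smul, smul_eq_mul, Complex.star_def, Complex.conj_I]
    linear_combination (-(ψ (star y * y))) * Complex.I_sq
  have h1 := him (x + y)
  have h2 := him (x + Complex.I • y)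
  rw [e1] at h1
  rw [e2] at h2
  simp only [Complex.add_im, Complex.sub_im, Complex.mul_im, Complex.I_re, Complex.I_im,
    him x, him y] at h1 h2
  apply Complex.ext <;> simp only [Complex.conj_re, Complex.conj_im] <;> linarith

private lemma psi_star (a : A) : ψ (star a) = (starRingEnd ℂ) (ψ a) := by
  simpa using psi_herm ψ hψpos 1 a

private lemma psi_cs (x y : A) :
    ‖ψ (star x * y)‖ ^ 2 ≤ (ψ (star x * x)).re * (ψ (star y * y)).re := by
  set p := ψ (star x * y) with hp
  set α := (ψ (star x * x)).re with hα
  set β := (ψ (star y * y)).re with hβ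
  have hα0 : 0 ≤ α := (Complex.nonneg_iff.mp (hψpos x)).1
  have hβ0 : 0 ≤ β := (Complex.nonneg_iff.mp (hψpos y)).1
  have key : ∀ t : ℂ, 0 ≤ β - 2 * ((starRingEnd ℂ) t * p).re + ‖t‖ ^ 2 * α := by
    intro t
    have e : ψ (star (y - t • x) * (y - t • x)) =
        ψ (star y * y) - (starRingEnd ℂ) t * ψ (star x * y) - t * ψ (star y * x)
          + ((starRingEnd ℂ) t * t) * ψ (star x * x) := by
      simp only [star_sub, star_smul, sub_mul, mul_sub, smul_mul_assoc, mul_smul_comm,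
        map_sub, map_smul, smul_smul, smul_eq_mul, Complex.star_def]
      ring
    rw [psi_herm ψ hψpos x y] at e
    have h := hψpos (y - t • x)
    rw [e] at h
    have hre0 := (Complex.nonneg_iff.mp h).1
    have hre : ((starRingEnd ℂ) t * t).re = ‖t‖ ^ 2 := by
      rw [← Complex.normSq_eq_conj_mul_self, Complex.ofReal_re, Complex.normSq_eq_norm_sq]
    have hconj : (t * (starRingEnd ℂ) p).re = ((starRingEnd ℂ) t * p).re := by
      simp [Complex.mul_re, mul_comm]
    have him : (ψ (star x * x)).im = 0 := (Complex.nonneg_iff.mp (hψpos x)).2.symm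
    simp only [Complex.sub_re, Complex.add_re, Complex.mul_re] at hre0 ⊢
    simp only [Complex.mul_re, Complex.mul_im, Complex.conj_re, Complex.conj_im]
      at hre0 hre hconj ⊢
    nlinarith [hre0, hre, hconj, him]
  by_cases hp0 : p = 0
  · simpa [hp0] using mul_nonneg hα0 hβ0
  have hpn : (0:ℝ) < ‖p‖ ^ 2 := pow_pos (norm_pos_iff.mpr hp0) 2
  by_cases hα' : α = 0
  · exfalso
    have hk := key ((((β + 1) / ‖p‖ ^ 2 : ℝ) : ℂ) * p)
    have hcp : ((starRingEnd ℂ) ((((β + 1) / ‖p‖ ^ 2 : ℝ) : ℂ) * p) * p).re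
        = β + 1 := by
      rw [map_mul, Complex.conj_ofReal, mul_assoc, ← Complex.normSq_eq_conj_mul_self]
      rw [← Complex.ofReal_mul, Complex.ofReal_re]
      rw [Complex.normSq_eq_norm_sq]
      exact div_mul_cancel₀ _ (pow_ne_zero 2 (norm_ne_zero_iff.mpr hp0))
    rw [hcp, hα'] at hk
    nlinarith
  · have hαpos : 0 < α := lt_of_le_of_ne hα0 (Ne.symm hα')
    have hk := key (((α⁻¹ : ℝ) : ℂ) * p)
    have hcp : ((starRingEnd ℂ) ((((α⁻¹ : ℝ)) : ℂ) * p) * p).re = α⁻¹ * ‖p‖ ^ 2 := by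
      rw [map_mul, Complex.conj_ofReal, mul_assoc, ← Complex.normSq_eq_conj_mul_self]
      rw [← Complex.ofReal_mul, Complex.ofReal_re]
      rw [Complex.normSq_eq_norm_sq]
    have hnt : ‖(((α⁻¹ : ℝ)) : ℂ) * p‖ ^ 2 = α⁻¹ ^ 2 * ‖p‖ ^ 2 := by
      rw [norm_mul, Complex.norm_real, mul_pow, Real.norm_eq_abs, sq_abs]
    rw [hcp, hnt] at hk
    have heq : α⁻¹ ^ 2 * ‖p‖ ^ 2 * α = α⁻¹ * ‖p‖ ^ 2 := by
      field_simp
    have h2 : 0 ≤ β - α⁻¹ * ‖p‖ ^ 2 := by nlinarith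
    calc ‖p‖ ^ 2 = α * (α⁻¹ * ‖p‖ ^ 2) := by field_simp
    _ ≤ α * β := by nlinarith

private lemma psi_bound (hψ1 : ψ 1 = 1) (x : A) (hx : ‖x‖ ≤ 1) :
    (ψ (star x * x)).re ≤ 1 := by
  letI : CStarAlgebra A :=
    { ‹NormedRing A›, ‹StarRing A›, ‹CompleteSpace A›, ‹CStarRing A›,
      ‹NormedAlgebra ℂ A›, ‹StarModule ℂ A› with }
  letI := CStarAlgebra.spectralOrder A
  haveI := CStarAlgebra.spectralOrderedRing A
  have h1 : star x * x ≤ 1 := by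
    rw [← CStarAlgebra.norm_le_one_iff_of_nonneg (star x * x) (star_mul_self_nonneg x)]
    calc ‖star x * x‖ = ‖x‖ * ‖x‖ := CStarRing.norm_star_mul_self
      _ ≤ 1 := by nlinarith [norm_nonneg x]
  have h2 : (1 : A) - star x * x ∈ AddSubmonoid.closure (Set.range fun s : A => star s * s) :=
    StarOrderedRing.nonneg_iff.mp (sub_nonneg.mpr h1)
  have h3 : 0 ≤ (ψ ((1 : A) - star x * x)).re := by
    have gen : ∀ a : A, a ∈ AddSubmonoid.closure (Set.range fun s : A => star s * s) →
        0 ≤ (ψ a).re := by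
      intro a ha
      induction ha using AddSubmonoid.closure_induction with
      | mem b hb => obtain ⟨s, rfl⟩ := hb; exact (Complex.nonneg_iff.mp (hψpos s)).1
      | zero => simp
      | add b c _ _ hpb hpc => rw [map_add]; simpa [Complex.add_re] using add_nonneg hpb hpc
    exact gen _ h2
  rw [map_sub, hψ1] at h3
  simp only [Complex.sub_re, Complex.one_re] at h3
  linarith

end Helpers

/-- let Γ be a countable discrete group, u : Γ → A the canonical unitaries of a
C*-algebra generated by a unitary representation of Γ (e.g. A = C*(Γ)), and ψ a state on A.
If for every g ≠ e the state ψ and its conjugation translate g·ψ : x ↦ ψ(u_g* x u_g) are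
singular (‖ψ − g·ψ‖ = 2), then ψ(u_g) = 0 for every g ≠ e, i.e. ψ is the regular trace δ_e. -/
theorem state_is_regular_trace_of_singular_translates
    {Γ : Type*} [Group Γ] [Countable Γ]
    {A : Type*} [NormedRing A] [StarRing A] [CStarRing A] [NormedAlgebra ℂ A]
    [CompleteSpace A] [StarModule ℂ A]
    (u : Γ →* unitary A)
    (ψ : A →L[ℂ] ℂ) (hψpos : ∀ a : A, 0 ≤ ψ (star a * a)) (hψ1 : ψ 1 = 1)
    (hsing : ∀ g : Γ, g ≠ 1 →
      ‖ψ - ψ.comp (ContinuousLinearMap.mulLeftRight ℂ A (star ((u g : A))) ((u g : A)))‖ = 2) :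
    ∀ g : Γ, g ≠ 1 → ψ ((u g : A)) = 0 := by
  intro g hg
  have hnt : Nontrivial A := by
    rcases subsingleton_or_nontrivial A with h | h
    · exfalso
      have h10 : (1 : A) = 0 := Subsingleton.elim _ _
      rw [h10, map_zero] at hψ1
      exact one_ne_zero hψ1.symm
    · exact h
  set U : A := ((u g : A)) with hU
  have hsU : star U * U = 1 := Unitary.star_mul_self_of_mem (u g).prop
  have hUnorm : ‖U‖ ≤ 1 := le_of_eq (CStarRing.norm_coe_unitary (u g))
  set D := ψ - ψ.comp (ContinuousLinearMap.mulLeftRight ℂ A (star U) U) with hD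
  have hDnorm : ‖D‖ = 2 := hsing g hg
  have hDapp : ∀ z : A, D z = ψ z - ψ (star U * z * U) := by
    intro z
    simp [hD, ContinuousLinearMap.mulLeftRight_apply]
  clear hD
  clear_value D
  have main : ∀ ε : ℝ, 0 < ε → ‖ψ U‖ ≤ ε := by
    intro ε hε
    set δ : ℝ := min (ε ^ 2 / 2) 1 with hδ
    have hδ0 : 0 < δ := lt_min (by positivity) one_pos
    have hδ1 : δ ≤ 1 := min_le_right _ _
    have hδε : 2 * δ ≤ ε ^ 2 := by
      have h := min_le_left (ε ^ 2 / 2) 1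
      rw [hδ]
      linarith
    obtain ⟨x₀, hx₀n, hx₀D⟩ := D.exists_lt_apply_of_lt_opNorm
      (show 2 - δ < ‖D‖ by rw [hDnorm]; linarith)
    set c : ℝ := ‖D x₀‖ with hc
    have hc0 : 0 < c := by
      have : (0:ℝ) ≤ 2 - δ := by linarith
      linarith
    set s : ℂ := ((c : ℂ))⁻¹ * (starRingEnd ℂ) (D x₀) with hs
    set x : A := s • x₀ with hx
    have hsnorm : ‖s‖ = 1 := by
      rw [hs, norm_mul, norm_inv, Complex.norm_real, Real.norm_eq_abs,
        abs_of_pos hc0, RCLike.norm_conj, ← hc]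
      field_simp
    have hxnorm : ‖x‖ ≤ 1 := by
      rw [hx, norm_smul, hsnorm, one_mul]
      exact hx₀n.le
    have hDx0 : D x = (c : ℂ) := by
      rw [hx, map_smul, smul_eq_mul, hs, mul_assoc, ← Complex.normSq_eq_conj_mul_self,
        Complex.normSq_eq_norm_sq, ← hc, ← Complex.ofReal_inv,
        ← Complex.ofReal_mul]
      congr 1
      rw [pow_two, ← mul_assoc, inv_mul_cancel₀ hc0.ne', one_mul]
    clear hsnorm hs
    clear_value s
    have hDx : D x = (c : ℂ) := hDx0
    clear hDx0
    clear_value x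
    clear hc
    clear_value c
    set a : ℂ := ψ x with ha
    set b : ℂ := ψ (star U * x * U) with hb
    have hab : a - b = (c : ℂ) := by rw [ha, hb, ← hDapp, hDx]
    have ha1 : ‖a‖ ≤ 1 := by
      have h := psi_cs ψ hψpos 1 x
      simp only [star_one, one_mul, hψ1, Complex.one_re] at h
      have hbnd := psi_bound ψ hψpos hψ1 x hxnorm
      nlinarith [norm_nonneg a]
    have hxU : ‖x * U‖ ≤ 1 := by
      calc ‖x * U‖ ≤ ‖x‖ * ‖U‖ := norm_mul_le _ _
        _ ≤ 1 := by nlinarith [norm_nonneg x, norm_nonneg U]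
    have hb1 : ‖b‖ ≤ 1 := by
      have h := psi_cs ψ hψpos U (x * U)
      rw [hsU, hψ1] at h
      simp only [Complex.one_re, one_mul] at h
      have hbnd := psi_bound ψ hψpos hψ1 (x * U) hxU
      have hassoc : star U * (x * U) = star U * x * U := by rw [mul_assoc]
      rw [hassoc] at h
      nlinarith [norm_nonneg b]
    have hare : 1 - δ ≤ a.re := by
      have h1 : a.re = b.re + c := by
        have := congrArg Complex.re hab
        simp only [Complex.sub_re, Complex.ofReal_re] at this
        linarith
      have h2 : -1 ≤ b.re := by
        have := Complex.abs_re_le_norm b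
        have := abs_le.mp (this.trans hb1)
        linarith [this.1]
      linarith
    have hbre : b.re ≤ δ - 1 := by
      have h1 : b.re = a.re - c := by
        have := congrArg Complex.re hab
        simp only [Complex.sub_re, Complex.ofReal_re] at this
        linarith
      have h2 : a.re ≤ 1 := by
        have := Complex.abs_re_le_norm a
        have := abs_le.mp (this.trans ha1)
        linarith [this.1, this.2]
      linarith
    -- bound 1 : ψ((1-x) (1-x)*) ≤ 2δ
    have hstar_re : (ψ (star x)).re = a.re := by
      rw [psi_star ψ hψpos x, Complex.conj_re, ha]
    have B1 : (ψ ((1 - x) * star (1 - x))).re ≤ 2 * δ := by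
      have e1 : ψ ((1 - x) * star (1 - x)) =
          ψ 1 - ψ (star x) - ψ x + ψ (x * star x) := by
        simp only [star_sub, star_one, sub_mul, mul_sub, one_mul, mul_one, map_sub, map_add]
        ring
      have hxs : (ψ (x * star x)).re ≤ 1 := by
        have hbnd := psi_bound ψ hψpos hψ1 (star x) (by rwa [norm_star])
        rwa [star_star] at hbnd
      rw [e1, hψ1]
      simp only [Complex.add_re, Complex.sub_re, Complex.one_re, hstar_re]
      linarith
    -- bound 2 : gψ((1+x)* (1+x)) ≤ 2δ
    have B2 : (ψ (star ((1 + x) * U) * ((1 + x) * U))).re ≤ 2 * δ := by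
      have expand : star ((1 + x) * U) * ((1 + x) * U) =
          star U * U + star U * x * U + star U * star x * U + star (x * U) * (x * U) := by
        simp only [star_mul, star_add, star_one]
        noncomm_ring
      have hconjb : ψ (star U * star x * U) = (starRingEnd ℂ) b := by
        have hst : star (star U * x * U) = star U * star x * U := by
          simp only [star_mul, star_star, mul_assoc]
        rw [← hst, psi_star ψ hψpos, hb]
      have h4 : (ψ (star (x * U) * (x * U))).re ≤ 1 := psi_bound ψ hψpos hψ1 (x * U) hxU
      rw [expand]
      simp only [map_add, hsU, hψ1, hconjb, Complex.add_re, Complex.one_re, Complex.conj_re]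
      linarith
    -- Cauchy-Schwarz conclusions
    have T1 : ‖ψ ((1 - x) * U)‖ ≤ ε := by
      have h := psi_cs ψ hψpos (star (1 - x)) U
      rw [star_star, hsU, hψ1] at h
      simp only [Complex.one_re, mul_one] at h
      have : ‖ψ ((1 - x) * U)‖ ^ 2 ≤ ε ^ 2 := by linarith
      exact le_of_pow_le_pow_left₀ two_ne_zero hε.le this
    have T2 : ‖ψ ((1 + x) * U)‖ ≤ ε := by
      have h := psi_cs ψ hψpos 1 ((1 + x) * U)
      simp only [star_one, one_mul, hψ1, Complex.one_re] at h
      have : ‖ψ ((1 + x) * U)‖ ^ 2 ≤ ε ^ 2 := by linarith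
      exact le_of_pow_le_pow_left₀ two_ne_zero hε.le this
    have hsum : ψ ((1 - x) * U) + ψ ((1 + x) * U) = 2 * ψ U := by
      rw [← map_add, ← add_mul]
      have h2 : (1 - x) + (1 + x) = (1 : A) + 1 := by noncomm_ring
      rw [h2, add_mul, one_mul, map_add]
      ring
    have hfinal : ‖(2 : ℂ) * ψ U‖ ≤ 2 * ε := by
      rw [← hsum]
      calc ‖ψ ((1 - x) * U) + ψ ((1 + x) * U)‖
          ≤ ‖ψ ((1 - x) * U)‖ + ‖ψ ((1 + x) * U)‖ := norm_add_le _ _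
        _ ≤ 2 * ε := by linarith
    rw [norm_mul] at hfinal
    simp only [Complex.norm_ofNat] at hfinal
    linarith
  have h0 : ‖ψ U‖ ≤ 0 := by
    refine le_of_forall_pos_le_add fun ε hε => ?_
    simpa using main ε hε
  simpa using norm_le_zero_iff.mp h0
end

section
/- Let Γ be a countable discrete group acting on a probability space (X, μ) by measure-preserving transformations. Then the function φ: Γ → [0,1] defined by φ(g) = μ(Fix(g)), where Fix(g) = {x ∈ X : g·x = x}, is a character of Γ (a conjugation-invariant normalized positive definite function). -/
open scoped ComplexOrder

/-- A function φ : Γ → ℂ is positive definite if all the Gram-type sums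
Σᵢⱼ cᵢ·conj(cⱼ)·φ(gⱼ⁻¹gᵢ) are nonnegative. -/
def IsPosDefFn {Γ : Type*} [Group Γ] (φ : Γ → ℂ) : Prop :=
  ∀ (n : ℕ) (g : Fin n → Γ) (c : Fin n → ℂ),
    0 ≤ ∑ i, ∑ j, c i * (starRingEnd ℂ) (c j) * φ ((g j)⁻¹ * g i)

open Finset MeasureTheory

lemma gram_nonneg_aux {α : Type*} [DecidableEq α] {n : ℕ} (v : Fin n → α) (c : Fin n → ℂ) :
    0 ≤ ∑ i, ∑ j, c i * (starRingEnd ℂ) (c j) * (if v i = v j then (1:ℂ) else 0) := by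
  have key : ∀ i, ∑ j, c i * (starRingEnd ℂ) (c j) * (if v i = v j then (1:ℂ) else 0)
      = c i * (starRingEnd ℂ) (∑ j ∈ univ.filter (fun j => v j = v i), c j) := by
    intro i
    rw [map_sum, Finset.mul_sum, Finset.sum_filter]
    congr 1; ext j
    by_cases h : v i = v j
    · simp [h, mul_comm]
    · simp [h, Ne.symm h]
  calc (0:ℂ) ≤ ∑ y ∈ univ.image v, (∑ i ∈ univ.filter (fun i => v i = y), c i) *
        (starRingEnd ℂ) (∑ i ∈ univ.filter (fun i => v i = y), c i) := by
        apply Finset.sum_nonneg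
        intro y _
        rw [Complex.mul_conj]
        exact_mod_cast Complex.normSq_nonneg _
    _ = ∑ i, c i * (starRingEnd ℂ) (∑ j ∈ univ.filter (fun j => v j = v i), c j) := by
        apply Finset.sum_image'
        intro i _
        rw [Finset.sum_mul]
        apply Finset.sum_congr rfl
        intro x hx
        simp only [mem_filter] at hx
        rw [hx.2]
    _ = _ := (Finset.sum_congr rfl (fun i _ => (key i).symm))

lemma integral_nonneg_cplx {X : Type*} [MeasurableSpace X] (μ : Measure X) {f : X → ℂ}
    (h : ∀ x, 0 ≤ f x) : 0 ≤ ∫ x, f x ∂μ := by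
  have h1 : ∀ x, 0 ≤ (f x).re ∧ (f x).im = 0 := fun x => by
    have := h x; rw [Complex.le_def] at this; simpa [eq_comm] using this
  have h2 : ∀ x, f x = (((f x).re : ℝ) : ℂ) := fun x =>
    (Complex.ext (by simp) (by simp [(h1 x).2])).symm
  calc (0:ℂ) ≤ ((∫ x, (f x).re ∂μ : ℝ) : ℂ) :=
        Complex.zero_le_real.2 (integral_nonneg fun x => (h1 x).1)
    _ = ∫ x, (((f x).re : ℝ) : ℂ) ∂μ := (integral_ofReal).symm
    _ = ∫ x, f x ∂μ := by simp_rw [← h2]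

/-- for a measure-preserving action of a countable group Γ on a probability
space (X, μ), the function g ↦ μ(Fix(g)) is a character of Γ: it is positive definite,
normalized, and conjugation-invariant. -/
theorem fixed_point_measure_is_character
    {Γ X : Type*} [Group Γ] [Countable Γ] [MulAction Γ X]
    [MeasurableSpace X] (μ : MeasureTheory.Measure X) [MeasureTheory.IsProbabilityMeasure μ]
    (hmeas : ∀ g : Γ, MeasurableSet {x : X | g • x = x})
    (hmp : ∀ g : Γ, MeasureTheory.MeasurePreserving (fun x : X => g • x) μ μ) :
    IsPosDefFn (fun g : Γ => ((μ {x : X | g • x = x}).toReal : ℂ)) ∧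
      ((μ {x : X | (1 : Γ) • x = x}).toReal : ℂ) = 1 ∧
      ∀ g h : Γ, μ {x : X | (h⁻¹ * g * h) • x = x} = μ {x : X | g • x = x} := by
  classical
  refine ⟨?_, ?_, ?_⟩
  · intro n g c
    simp only
    set A : Fin n → Fin n → Set X := fun i j => {x | ((g j)⁻¹ * g i) • x = x} with hA
    have hterm : ∀ i j : Fin n, c i * (starRingEnd ℂ) (c j) * ((μ (A i j)).toReal : ℂ)
        = ∫ x, (A i j).indicator (fun _ => c i * (starRingEnd ℂ) (c j)) x ∂μ := by
      intro i j
      rw [integral_indicator_const _ (hmeas _), Complex.real_smul, mul_comm]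
      rfl
    rw [show (∑ i, ∑ j, c i * (starRingEnd ℂ) (c j) * ((μ {x | ((g j)⁻¹ * g i) • x = x}).toReal : ℂ)) = ∑ i, ∑ j, ∫ x, (A i j).indicator (fun _ => c i * (starRingEnd ℂ) (c j)) x ∂μ from Finset.sum_congr rfl fun i _ => Finset.sum_congr rfl fun j _ => hterm i j]
    rw [← Finset.sum_product' (f := fun i j =>
      ∫ x, (A i j).indicator (fun _ => c i * (starRingEnd ℂ) (c j)) x ∂μ),
      ← integral_finset_sum _ (fun p _ => (integrable_const _).indicator (hmeas _))]
    apply integral_nonneg_cplx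
    intro x
    rw [Finset.sum_product' (f := fun i j =>
      (A i j).indicator (fun _ => c i * (starRingEnd ℂ) (c j)) x)]
    have hval : ∀ i j : Fin n, (A i j).indicator (fun _ => c i * (starRingEnd ℂ) (c j)) x
        = c i * (starRingEnd ℂ) (c j) * (if g i • x = g j • x then (1:ℂ) else 0) := by
      intro i j
      have hx : x ∈ A i j ↔ g i • x = g j • x := by
        simp [hA, Set.mem_setOf_eq, mul_smul, inv_smul_eq_iff]
      by_cases hc : g i • x = g j • x <;>
        simp [Set.indicator_apply, hx, hc]
    simp only [hval]
    exact gram_nonneg_aux (fun i => g i • x) c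
  · have : {x : X | (1:Γ) • x = x} = Set.univ := by ext x; simp
    rw [this, measure_univ]; simp
  · intro g h
    have hset : {x : X | (h⁻¹ * g * h) • x = x} = (fun x : X => h • x) ⁻¹' {x | g • x = x} := by
      ext x
      simp [Set.mem_setOf_eq, mul_smul, inv_smul_eq_iff]
    rw [hset, (hmp h).measure_preimage (hmeas g).nullMeasurableSet]
end

section
/- Let Γ be a countable group which is an increasing union Γ = ⋃ₙ Γₙ of subgroups. Let C ⊆ PD₁(Γ) be a nonempty compact convex subset invariant under conjugation by Γ. If for every n, every nonempty compact convex Γₙ-invariant subset of PD₁(Γₙ) contains a Γₙ-invariant point, then C contains a Γ-invariant point (a character). -/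
open scoped ComplexOrder

/-- The set of normalized positive definite functions on Γ. -/
def PD1 (Γ : Type*) [Group Γ] : Set (Γ → ℂ) :=
  {φ | IsPosDefFn φ ∧ φ 1 = 1}

/-- A function is conjugation-invariant (a character when in PD₁). -/
def ConjInvFn {Γ : Type*} [Group Γ] (φ : Γ → ℂ) : Prop :=
  ∀ g x : Γ, φ (g⁻¹ * x * g) = φ x

/-- A set of functions on Γ is invariant under the conjugation action of Γ. -/
def ConjInvSet (Γ : Type*) [Group Γ] (C : Set (Γ → ℂ)) : Prop :=
  ∀ φ ∈ C, ∀ g : Γ, (fun x => φ (g⁻¹ * x * g)) ∈ C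

/-- if Γ = ⋃ₙ Γₙ is an increasing union of subgroups each of which has the fixed
point property for nonempty compact convex conjugation-invariant subsets of PD₁, then every
nonempty compact convex conjugation-invariant subset C ⊆ PD₁(Γ) contains a character of Γ. -/
theorem character_in_invariant_compact_convex_of_increasing_union
    {Γ : Type*} [Group Γ] [Countable Γ]
    (Γn : ℕ → Subgroup Γ) (hmono : Monotone Γn) (hunion : ∀ g : Γ, ∃ n, g ∈ Γn n)
    (C : Set (Γ → ℂ)) (hne : C.Nonempty) (hcpt : IsCompact C) (hconv : Convex ℝ C)
    (hsub : C ⊆ PD1 Γ) (hinv : ConjInvSet Γ C)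
    (hloc : ∀ (n : ℕ) (D : Set (↥(Γn n) → ℂ)), D.Nonempty → IsCompact D → Convex ℝ D →
      D ⊆ PD1 ↥(Γn n) → ConjInvSet ↥(Γn n) D → ∃ ψ ∈ D, ConjInvFn ψ) :
    ∃ φ ∈ C, ConjInvFn φ := by
  classical
  -- The sets Cₙ: elements of C whose restriction to Γₙ is Γₙ-conjugation-invariant.
  set Cn : ℕ → Set (Γ → ℂ) :=
    fun n => {φ | φ ∈ C ∧ ∀ g ∈ Γn n, ∀ x ∈ Γn n, φ (g⁻¹ * x * g) = φ x} with hCn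
  -- Each Cₙ is closed.
  have hclosed : ∀ n, IsClosed (Cn n) := by
    intro n
    have h1 : IsClosed ({φ : Γ → ℂ | φ ∈ C}) := hcpt.isClosed
    have h2 : IsClosed {φ : Γ → ℂ | ∀ g ∈ Γn n, ∀ x ∈ Γn n, φ (g⁻¹ * x * g) = φ x} := by
      have : {φ : Γ → ℂ | ∀ g ∈ Γn n, ∀ x ∈ Γn n, φ (g⁻¹ * x * g) = φ x} =
          ⋂ (g : Γn n), ⋂ (x : Γn n),
            {φ : Γ → ℂ | φ ((g : Γ)⁻¹ * x * g) = φ x} := by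
        ext φ
        simp only [Set.mem_setOf_eq, Set.mem_iInter]
        constructor
        · intro h g x; exact h g g.2 x x.2
        · intro h g hg x hx; exact h ⟨g, hg⟩ ⟨x, hx⟩
      rw [this]
      refine isClosed_iInter fun g => isClosed_iInter fun x => ?_
      exact isClosed_eq (continuous_apply _) (continuous_apply _)
    exact h1.inter h2
  -- Each Cₙ is nonempty, by applying the local hypothesis to the restriction of C.
  have hnonempty : ∀ n, (Cn n).Nonempty := by
    intro n
    set res : (Γ → ℂ) → (↥(Γn n) → ℂ) := fun φ x => φ (x : Γ) with hres
    have hrescont : Continuous res := by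
      apply continuous_pi; intro x; exact continuous_apply _
    set D : Set (↥(Γn n) → ℂ) := res '' C with hD
    have hDne : D.Nonempty := hne.image res
    have hDcpt : IsCompact D := hcpt.image hrescont
    have hDconv : Convex ℝ D := by
      rintro _ ⟨φ, hφ, rfl⟩ _ ⟨ψ, hψ, rfl⟩ a b ha hb hab
      exact ⟨a • φ + b • ψ, hconv hφ hψ ha hb hab, rfl⟩
    have hDsub : D ⊆ PD1 ↥(Γn n) := by
      rintro _ ⟨φ, hφ, rfl⟩
      obtain ⟨hpd, h1⟩ := hsub hφ
      refine ⟨fun m g c => ?_, ?_⟩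
      · have := hpd m (fun i => (g i : Γ)) c
        simpa [res] using this
      · simpa [res] using h1
    have hDinv : ConjInvSet ↥(Γn n) D := by
      rintro _ ⟨φ, hφ, rfl⟩ g
      refine ⟨fun x => φ ((g : Γ)⁻¹ * x * g), hinv φ hφ g, ?_⟩
      funext x
      simp [res]
    obtain ⟨ψ, ⟨φ, hφ, rfl⟩, hψinv⟩ := hloc n D hDne hDcpt hDconv hDsub hDinv
    refine ⟨φ, hφ, fun g hg x hx => ?_⟩
    have := hψinv ⟨g, hg⟩ ⟨x, hx⟩
    simpa [res] using this
  -- The Cₙ are decreasing, closed in the compact C, so the intersection is nonempty.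
  have hdec : ∀ i, Cn (i + 1) ⊆ Cn i := by
    intro i φ hφ
    exact ⟨hφ.1, fun g hg x hx =>
      hφ.2 g (hmono (Nat.le_succ i) hg) x (hmono (Nat.le_succ i) hx)⟩
  have hC0cpt : IsCompact (Cn 0) :=
    hcpt.of_isClosed_subset (hclosed 0) (fun φ hφ => hφ.1)
  obtain ⟨φ, hφ⟩ := IsCompact.nonempty_iInter_of_sequence_nonempty_isCompact_isClosed
    Cn hdec hnonempty hC0cpt hclosed
  simp only [Set.mem_iInter] at hφ
  refine ⟨φ, (hφ 0).1, fun g x => ?_⟩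
  obtain ⟨m, hm⟩ := hunion g
  obtain ⟨k, hk⟩ := hunion x
  exact (hφ (max m k)).2 g (hmono (le_max_left m k) hm) x (hmono (le_max_right m k) hk)
end

section
/- Let G be a locally compact second countable group, μ a Borel probability measure on G whose support generates a dense subsemigroup of G, and let (M, φ) be a von Neumann algebra with a faithful normal state φ, on which G acts continuously by automorphisms σ such that φ is μ-stationary: ∫ φ∘σ_g⁻¹ dμ(g) = φ. If x ∈ M satisfies T_μ(x) = x where T_μ(x) = ∫ σ_g⁻¹(x) dμ(g), then σ_g(x) = x for all g ∈ G. -/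
open MeasureTheory

/-- The topological support of a measure: points all of whose neighborhoods have nonzero
measure. -/
def msupport {G : Type*} [TopologicalSpace G] [MeasurableSpace G] (μ : Measure G) : Set G :=
  {g | ∀ U ∈ nhds g, μ U ≠ 0}

/-- let G be an lcsc group, μ a generating Borel probability measure on G
(its support generates a dense subsemigroup), and M a von Neumann algebra with a continuous
G-action σ by *-automorphisms and a faithful normal μ-stationary state φ. If x ∈ M satisfies
T_μ(x) = ∫ σ_g⁻¹(x) dμ(g) = x, then σ_g(x) = x for all g ∈ G. -/
theorem fixed_of_Tmu_fixed
    {G : Type*} [Group G] [TopologicalSpace G] [IsTopologicalGroup G]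
    [LocallyCompactSpace G] [SecondCountableTopology G] [MeasurableSpace G] [BorelSpace G]
    (μ : Measure G) [IsProbabilityMeasure μ]
    (hgen : Dense ((Subsemigroup.closure (msupport μ) : Subsemigroup G) : Set G))
    {H : Type*} [NormedAddCommGroup H] [InnerProductSpace ℂ H] [CompleteSpace H]
    (M : VonNeumannAlgebra H)
    (σ : G → (H →L[ℂ] H) → (H →L[ℂ] H))
    (hmem : ∀ g : G, ∀ x ∈ M, σ g x ∈ M)
    (hone : ∀ x ∈ M, σ 1 x = x)
    (hmul : ∀ g h : G, ∀ x ∈ M, σ (g * h) x = σ g (σ h x))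
    (hlin : ∀ g : G, ∀ x ∈ M, ∀ y ∈ M, ∀ c : ℂ, σ g (c • x + y) = c • σ g x + σ g y)
    (hmulhom : ∀ g : G, ∀ x ∈ M, ∀ y ∈ M, σ g (x * y) = σ g x * σ g y)
    (hstar : ∀ g : G, ∀ x ∈ M, σ g (star x) = star (σ g x))
    (hcont : ∀ x ∈ M, ∀ ξ η : H, Continuous fun g : G => (@inner ℂ H _ (σ g x ξ) η))
    (φ : (H →L[ℂ] H) → ℂ)
    (hφnormal : ∃ ξ : ℕ → H, (∑' i, ‖ξ i‖ ^ 2) = 1 ∧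
      ∀ x : H →L[ℂ] H, φ x = ∑' i, @inner ℂ H _ (x (ξ i)) (ξ i))
    (hφfaithful : ∀ x : H →L[ℂ] H, x ∈ M → x.IsPositive → φ x = 0 → x = 0)
    (hφstat : ∀ x ∈ M, ∫ g : G, φ (σ g⁻¹ x) ∂μ = φ x)
    (x : H →L[ℂ] H) (hx : x ∈ M) (hfix : (∫ g : G, σ g⁻¹ x ∂μ) = x) :
    ∀ g : G, σ g x = x := by
  classical
  -- σ g 0 = 0
  have hσ0 : ∀ g : G, σ g (0 : H →L[ℂ] H) = 0 := by
    intro g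
    have h := hlin g 0 M.zero_mem 0 M.zero_mem 1
    simp only [one_smul, add_zero] at h
    exact left_eq_add.mp h
  by_cases hx0 : x = 0
  · intro g; rw [hx0, hσ0]
  obtain ⟨ξ, hξ1, hφdef⟩ := hφnormal
  have hξsum : Summable (fun i => ‖ξ i‖ ^ 2) := by
    by_contra h
    rw [tsum_eq_zero_of_not_summable h] at hξ1
    norm_num at hξ1
  -- summability of the inner products
  have hsum : ∀ z : H →L[ℂ] H, Summable (fun i => (inner ℂ (ξ i) (z (ξ i)) : ℂ)) := by
    intro z
    apply Summable.of_norm_bounded (hξsum.mul_left ‖z‖)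
    intro i
    calc ‖(inner ℂ (ξ i) (z (ξ i)) : ℂ)‖ ≤ ‖ξ i‖ * ‖z (ξ i)‖ := norm_inner_le_norm _ _
      _ ≤ ‖ξ i‖ * (‖z‖ * ‖ξ i‖) :=
          mul_le_mul_of_nonneg_left (z.le_opNorm _) (norm_nonneg _)
      _ = ‖z‖ * ‖ξ i‖ ^ 2 := by ring
  -- the normal state as a continuous linear map (note φ itself is conjugate-linear)
  let Φlin : (H →L[ℂ] H) →ₗ[ℂ] ℂ :=
    { toFun := fun z => ∑' i, (inner ℂ (ξ i) (z (ξ i)) : ℂ)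
      map_add' := by
        intro a b
        simp only [ContinuousLinearMap.add_apply, inner_add_right]
        exact Summable.tsum_add (hsum a) (hsum b)
      map_smul' := by
        intro c a
        simp only [ContinuousLinearMap.coe_smul', Pi.smul_apply, inner_smul_right,
          RingHom.id_apply, smul_eq_mul]
        exact tsum_mul_left }
  have hΦbound : ∀ z : H →L[ℂ] H, ‖Φlin z‖ ≤ 1 * ‖z‖ := by
    intro z
    have h1 : ‖Φlin z‖ ≤ ∑' i, ‖(inner ℂ (ξ i) (z (ξ i)) : ℂ)‖ := by
      apply norm_tsum_le_tsum_norm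
      exact (hsum z).norm
    have h2 : ∑' i, ‖(inner ℂ (ξ i) (z (ξ i)) : ℂ)‖ ≤ ∑' i, ‖z‖ * ‖ξ i‖ ^ 2 := by
      apply Summable.tsum_le_tsum _ (hsum z).norm (hξsum.mul_left ‖z‖)
      intro i
      calc ‖(inner ℂ (ξ i) (z (ξ i)) : ℂ)‖ ≤ ‖ξ i‖ * ‖z (ξ i)‖ := norm_inner_le_norm _ _
        _ ≤ ‖ξ i‖ * (‖z‖ * ‖ξ i‖) :=
            mul_le_mul_of_nonneg_left (z.le_opNorm _) (norm_nonneg _)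
        _ = ‖z‖ * ‖ξ i‖ ^ 2 := by ring
    have h3 : ∑' i, ‖z‖ * ‖ξ i‖ ^ 2 = ‖z‖ := by
      rw [tsum_mul_left, hξ1, mul_one]
    linarith
  let Φ : (H →L[ℂ] H) →L[ℂ] ℂ := Φlin.mkContinuous 1 hΦbound
  have hΦapp : ∀ z : H →L[ℂ] H, Φ z = ∑' i, (inner ℂ (ξ i) (z (ξ i)) : ℂ) := fun z => rfl
  -- φ is the conjugate of Φ
  have hφΦ : ∀ z : H →L[ℂ] H, φ z = (starRingEnd ℂ) (Φ z) := by
    intro z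
    rw [hφdef, hΦapp]
    rw [show ((starRingEnd ℂ) (∑' i, (inner ℂ (ξ i) (z (ξ i)) : ℂ))
        = ∑' i, (starRingEnd ℂ) (inner ℂ (ξ i) (z (ξ i)) : ℂ)) from tsum_star]
    congr 1
    funext i
    exact (inner_conj_symm _ _).symm
  -- φ ∘ star = Φ
  have hφstarΦ : ∀ z : H →L[ℂ] H, φ (star z) = Φ z := by
    intro z
    rw [hφdef, hΦapp]
    congr 1
    funext i
    rw [ContinuousLinearMap.star_eq_adjoint]
    exact ContinuousLinearMap.adjoint_inner_left z (ξ i) (ξ i)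
  -- the value of φ on star y * y
  have hpos : ∀ y : H →L[ℂ] H, φ (star y * y) = ((∑' i, ‖y (ξ i)‖ ^ 2 : ℝ) : ℂ) := by
    intro y
    rw [hφdef, Complex.ofReal_tsum]
    congr 1
    funext i
    rw [ContinuousLinearMap.mul_apply, ContinuousLinearMap.star_eq_adjoint,
      ContinuousLinearMap.adjoint_inner_left, inner_self_eq_norm_sq_to_K]
    norm_cast
  -- faithfulness: φ (star y * y) = 0 with y ∈ M implies y = 0
  have key : ∀ y : H →L[ℂ] H, y ∈ M → φ (star y * y) = 0 → y = 0 := by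
    intro y hy h0
    have hyyM : star y * y ∈ M := mul_mem (star_mem hy) hy
    have hyypos : (star y * y).IsPositive := by
      refine ContinuousLinearMap.isPositive_def'.mpr ⟨?_, ?_⟩
      · rw [IsSelfAdjoint, star_mul, star_star]
      · intro v
        have h2 : (inner ℂ ((star y * y) v) v : ℂ) = ((‖y v‖ ^ 2 : ℝ) : ℂ) := by
          rw [ContinuousLinearMap.mul_apply, ContinuousLinearMap.star_eq_adjoint,
            ContinuousLinearMap.adjoint_inner_left, inner_self_eq_norm_sq_to_K]
          norm_cast
        have h3 : (star y * y).reApplyInnerSelf v = ‖y v‖ ^ 2 := by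
          rw [ContinuousLinearMap.reApplyInnerSelf, h2]
          norm_cast
        rw [h3]
        positivity
    have hyy0 : star y * y = 0 := hφfaithful _ hyyM hyypos h0
    ext v
    have h2 : (inner ℂ ((star y * y) v) v : ℂ) = inner ℂ (y v) (y v) := by
      rw [ContinuousLinearMap.mul_apply, ContinuousLinearMap.star_eq_adjoint,
        ContinuousLinearMap.adjoint_inner_left]
    have : (inner ℂ (y v) (y v) : ℂ) = 0 := by
      rw [← h2, hyy0]; simp
    simpa using inner_self_eq_zero.mp this
  -- φ (star x * x) ≠ 0
  have hc0 : φ (star x * x) ≠ 0 := fun h => hx0 (key x hx h)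
  -- integrability of g ↦ σ g⁻¹ x
  have hI : Integrable (fun g : G => σ g⁻¹ x) μ := by
    by_contra h
    rw [integral_undef h] at hfix
    exact hx0 hfix.symm
  -- integrability of g ↦ φ (σ g⁻¹ (star x * x))
  have hxxM : star x * x ∈ M := mul_mem (star_mem hx) hx
  have hI2 : Integrable (fun g : G => φ (σ g⁻¹ (star x * x))) μ := by
    by_contra h
    exact hc0 ((hφstat _ hxxM).symm.trans (integral_undef h))
  -- the continuous linear map z ↦ Φ (star x * z)
  let L : (H →L[ℂ] H) →L[ℂ] ℂ :=
    Φ.comp ((ContinuousLinearMap.mul ℂ (H →L[ℂ] H)) (star x))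
  have hLapp : ∀ z : H →L[ℂ] H, L z = Φ (star x * z) := fun z => rfl
  have hIL : Integrable (fun g : G => Φ (star x * σ g⁻¹ x)) μ := L.integrable_comp hI
  have hintL : ∫ g : G, Φ (star x * σ g⁻¹ x) ∂μ = Φ (star x * x) := by
    have h := L.integral_comp_comm hI
    rw [hfix] at h
    exact h
  -- the four scalar integrals
  have hint1 : ∫ g : G, φ (star x * σ g⁻¹ x) ∂μ = (starRingEnd ℂ) (Φ (star x * x)) := by
    simp_rw [hφΦ]
    rw [integral_conj, hintL]
  have hconjint : Integrable (fun g : G => φ (star x * σ g⁻¹ x)) μ := by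
    have h := Complex.conjCLE.toContinuousLinearMap.integrable_comp hIL
    simpa only [ContinuousLinearEquiv.coe_coe, Complex.conjCLE_apply, ← hφΦ] using h
  have heq2 : ∀ g : G, φ (star (σ g⁻¹ x) * x) = Φ (star x * σ g⁻¹ x) := by
    intro g
    rw [← hφstarΦ (star x * σ g⁻¹ x), star_mul, star_star]
  have hint2 : ∫ g : G, φ (star (σ g⁻¹ x) * x) ∂μ = Φ (star x * x) := by
    simp_rw [heq2]; exact hintL
  have hI2' : Integrable (fun g : G => φ (star (σ g⁻¹ x) * x)) μ := by
    simp_rw [heq2]; exact hIL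
  -- Φ (star x * x) = φ (star x * x) (it's real)
  have hΦφxx : Φ (star x * x) = φ (star x * x) := by
    rw [← hφstarΦ (star x * x), star_mul, star_star]
  -- φ is additive on differences
  have hφsub : ∀ a b : H →L[ℂ] H, φ (a - b) = φ a - φ b := by
    intro a b
    rw [hφΦ, hφΦ, hφΦ, map_sub, map_sub]
  -- expansion of star (x - y) * (x - y)
  have expand : ∀ y : H →L[ℂ] H,
      star (x - y) * (x - y) = (star x * x - star x * y) - (star y * x - star y * y) := by
    intro y
    rw [star_sub]
    noncomm_ring
  -- σ g⁻¹ (star x * x) = star (σ g⁻¹ x) * σ g⁻¹ x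
  have hσxx : ∀ g : G, σ g⁻¹ (star x * x) = star (σ g⁻¹ x) * σ g⁻¹ x := by
    intro g
    rw [hmulhom g⁻¹ (star x) (star_mem hx) x hx, hstar g⁻¹ x hx]
  -- the nonnegative function F
  set F : G → ℂ := fun g => φ (star (x - σ g⁻¹ x) * (x - σ g⁻¹ x)) with hF
  have hFexp : ∀ g : G, F g = (φ (star x * x) - φ (star x * σ g⁻¹ x))
      - (φ (star (σ g⁻¹ x) * x) - φ (σ g⁻¹ (star x * x))) := by
    intro g
    rw [hF]
    simp only
    rw [expand, hφsub, hφsub, hφsub, hσxx]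
  have hFint : Integrable F μ := by
    have : Integrable (fun g : G => (φ (star x * x) - φ (star x * σ g⁻¹ x))
        - (φ (star (σ g⁻¹ x) * x) - φ (σ g⁻¹ (star x * x)))) μ :=
      (((integrable_const _).sub hconjint).sub (hI2'.sub hI2))
    exact this.congr (Filter.EventuallyEq.of_eq (funext fun g => (hFexp g).symm))
  have hF0 : ∫ g : G, F g ∂μ = 0 := by
    have h : ∫ g : G, F g ∂μ = (∫ g : G, (φ (star x * x) - φ (star x * σ g⁻¹ x)) ∂μ)
        - ∫ g : G, (φ (star (σ g⁻¹ x) * x) - φ (σ g⁻¹ (star x * x))) ∂μ := by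
      simp_rw [hFexp]
      exact integral_sub ((integrable_const _).sub hconjint) (hI2'.sub hI2)
    rw [h, integral_sub (integrable_const _) hconjint, integral_sub hI2' hI2,
      integral_const, hint1, hint2, hφstat _ hxxM, hΦφxx]
    have hreal : (starRingEnd ℂ) (φ (star x * x)) = φ (star x * x) := by
      rw [hpos]
      exact Complex.conj_ofReal _
    rw [hreal]
    simp [measure_univ]
  -- F g is the coercion of a nonnegative real number
  set r : G → ℝ := fun g => ∑' i, ‖(x - σ g⁻¹ x) (ξ i)‖ ^ 2 with hr
  have hFr : ∀ g : G, F g = ((r g : ℝ) : ℂ) := fun g => hpos _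
  have hrnonneg : ∀ g : G, 0 ≤ r g := fun g => tsum_nonneg (fun i => by positivity)
  have hrint : Integrable r μ := by
    have h := Complex.reCLM.integrable_comp hFint
    apply h.congr
    apply Filter.EventuallyEq.of_eq
    funext g
    simp only [Complex.reCLM_apply, Function.comp]
    rw [hFr g, Complex.ofReal_re]
  have hrzero : ∫ g : G, r g ∂μ = 0 := by
    have h : ∫ g : G, F g ∂μ = ((∫ g : G, r g ∂μ : ℝ) : ℂ) := by
      simp_rw [hFr]
      exact integral_ofReal
    rw [hF0] at h
    exact_mod_cast h.symm
  have hae : ∀ᵐ g : G ∂μ, σ g⁻¹ x = x := by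
    have h := (integral_eq_zero_iff_of_nonneg hrnonneg hrint).mp hrzero
    filter_upwards [h] with g hg
    have hFg0 : F g = 0 := by rw [hFr g, hg]; simp
    have hyM : x - σ g⁻¹ x ∈ M := sub_mem hx (hmem g⁻¹ x hx)
    have := key _ hyM hFg0
    have := sub_eq_zero.mp this
    exact this.symm
  -- the fixed set
  set B : Set G := {g : G | σ g⁻¹ x = x} with hB
  have hBclosed : IsClosed B := by
    have hBeq : B = ⋂ (v : H), ⋂ (w : H), {g : G | (inner ℂ (σ g⁻¹ x v) w : ℂ) = inner ℂ (x v) w} := by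
      ext g
      simp only [Set.mem_iInter, Set.mem_setOf_eq, hB]
      constructor
      · intro h v w; rw [h]
      · intro h
        ext v
        apply ext_inner_right ℂ
        intro w
        exact h v w
    rw [hBeq]
    apply isClosed_iInter
    intro v
    apply isClosed_iInter
    intro w
    exact isClosed_eq ((hcont x hx v w).comp continuous_inv) continuous_const
  have hBmul : ∀ a b : G, a ∈ B → b ∈ B → a * b ∈ B := by
    intro a b ha hb
    show σ (a * b)⁻¹ x = x
    rw [mul_inv_rev, hmul b⁻¹ a⁻¹ x hx, ha, hb]
  have hBnull : μ Bᶜ = 0 := by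
    rw [ae_iff] at hae
    exact hae
  have hsuppB : msupport μ ⊆ B := by
    intro g hg
    by_contra hgB
    exact hg Bᶜ (hBclosed.isOpen_compl.mem_nhds hgB) hBnull
  -- B contains the closure of the subsemigroup generated by the support
  have hSB : ((Subsemigroup.closure (msupport μ) : Subsemigroup G) : Set G) ⊆ B := by
    have : Subsemigroup.closure (msupport μ) ≤ ⟨B, fun {a b} ha hb => hBmul a b ha hb⟩ :=
      Subsemigroup.closure_le.mpr hsuppB
    exact this
  have hBall : ∀ g : G, g ∈ B := by
    intro g
    have h1 : closure ((Subsemigroup.closure (msupport μ) : Subsemigroup G) : Set G) ⊆ B :=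
      hBclosed.closure_subset_iff.mpr hSB
    have h2 := hgen.closure_eq
    rw [h2] at h1
    exact h1 (Set.mem_univ g)
  intro g
  have := hBall g⁻¹
  rw [hB] at this
  simpa using this
end

section
/- Let Γ be a lattice in an lcsc group G = G₁ × G₂ and let ι: Γ → G₁ be the first projection restricted to Γ, assumed to have dense image. Let π: Γ → U(H) be a unitary representation. Then the set H_ι of vectors v ∈ H such that ‖π(γₙ)v − v‖ → 0 for every sequence (γₙ) in Γ with ι(γₙ) → e in G₁, is a closed Γ-invariant linear subspace of H, and the representation of Γ on H_ι extends to a continuous unitary representation of G₁ on H_ι. -/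
set_option linter.unusedSectionVars false
set_option linter.unnecessarySimpa false

open Filter Topology

namespace Stmt14

variable {G₁ G₂ : Type*} [Group G₁] [TopologicalSpace G₁] [IsTopologicalGroup G₁]
  [Group G₂]
  {Γ : Subgroup (G₁ × G₂)}
  {H : Type*} [NormedAddCommGroup H] [InnerProductSpace ℂ H] [CompleteSpace H]

variable (π : Γ →* (H ≃ₗᵢ[ℂ] H))

def S : Set H := {v | ∀ γ : ℕ → Γ,
    Tendsto (fun n => ((γ n : G₁ × G₂).1)) atTop (𝓝 1) →
    Tendsto (fun n => π (γ n) v) atTop (𝓝 v)}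

lemma pi_mul_apply (a b : Γ) (v : H) : π (a * b) v = π a (π b v) := by
  rw [map_mul]; rfl

lemma dist_pi_pi (a b : Γ) (v : H) :
    dist (π a v) (π b v) = dist (π (b⁻¹ * a) v) v := by
  have h : π b (π (b⁻¹ * a) v) = π a v := by
    rw [← pi_mul_apply, mul_inv_cancel_left]
  rw [← h, LinearIsometryEquiv.dist_map]

lemma coe_fst_mul (a b : Γ) :
    ((a * b : Γ) : G₁ × G₂).1 = (a : G₁ × G₂).1 * (b : G₁ × G₂).1 := rfl

lemma coe_fst_inv (a : Γ) : ((a⁻¹ : Γ) : G₁ × G₂).1 = ((a : G₁ × G₂).1)⁻¹ := rfl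

lemma diff_tendsto {v : H} (hv : v ∈ S π) {g : G₁} {γ δ : ℕ → Γ}
    (hγ : Tendsto (fun n => ((γ n : G₁ × G₂).1)) atTop (𝓝 g))
    (hδ : Tendsto (fun n => ((δ n : G₁ × G₂).1)) atTop (𝓝 g)) :
    Tendsto (fun n => dist (π (γ n) v) (π (δ n) v)) atTop (𝓝 0) := by
  have h1 : Tendsto (fun n => (((δ n)⁻¹ * γ n : Γ) : G₁ × G₂).1) atTop (𝓝 1) := by
    have := hδ.inv.mul hγ
    simpa [coe_fst_mul, coe_fst_inv] using this
  have h2 := tendsto_iff_dist_tendsto_zero.mp (hv _ h1)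
  simpa only [dist_pi_pi π] using h2

lemma cauchy_of_tendsto {v : H} (hv : v ∈ S π) {g : G₁} {γ : ℕ → Γ}
    (hγ : Tendsto (fun n => ((γ n : G₁ × G₂).1)) atTop (𝓝 g)) :
    CauchySeq (fun n => π (γ n) v) := by
  rw [Metric.cauchySeq_iff]
  by_contra h
  push_neg at h
  obtain ⟨ε, hε, hN⟩ := h
  choose φ hφ ψ hψ hd using hN
  have hφt : Tendsto φ atTop atTop := tendsto_atTop_mono hφ tendsto_id
  have hψt : Tendsto ψ atTop atTop := tendsto_atTop_mono hψ tendsto_id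
  have h0 := diff_tendsto π hv (hγ.comp hφt) (hγ.comp hψt)
  have h3 := (h0.eventually_lt_const hε).exists
  obtain ⟨n, hn⟩ := h3
  exact absurd (hd n) (not_le.mpr hn)

lemma S_zero : (0 : H) ∈ S π := by
  intro γ _
  simpa using tendsto_const_nhds

lemma S_add {v w : H} (hv : v ∈ S π) (hw : w ∈ S π) : v + w ∈ S π := by
  intro γ hγ
  simpa using (hv γ hγ).add (hw γ hγ)

lemma S_smul (c : ℂ) {v : H} (hv : v ∈ S π) : c • v ∈ S π := by
  intro γ hγ
  simpa using (hv γ hγ).const_smul c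

lemma S_closed : IsClosed (S π) := by
  refine isClosed_of_closure_subset fun v hv γ hγ => ?_
  rw [Metric.tendsto_atTop]
  intro ε hε
  obtain ⟨w, hwS, hw⟩ := Metric.mem_closure_iff.mp hv (ε / 3) (by linarith)
  have h2 := Metric.tendsto_atTop.mp (hwS γ hγ) (ε / 3) (by linarith)
  obtain ⟨N, hN⟩ := h2
  refine ⟨N, fun n hn => ?_⟩
  have h3 : dist (π (γ n) v) (π (γ n) w) = dist v w := LinearIsometryEquiv.dist_map _ _ _
  have h4 := hN n hn
  calc dist (π (γ n) v) v ≤ dist (π (γ n) v) (π (γ n) w) + dist (π (γ n) w) w + dist w v :=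
        dist_triangle4 _ _ _ _
    _ < ε := by rw [h3, dist_comm w v]; linarith

lemma S_invariant (γ₀ : Γ) {v : H} (hv : v ∈ S π) : π γ₀ v ∈ S π := by
  intro γ hγ
  have h1 : Tendsto (fun n => ((γ₀⁻¹ * γ n * γ₀ : Γ) : G₁ × G₂).1) atTop (𝓝 1) := by
    have := (hγ.const_mul (((γ₀⁻¹ : Γ) : G₁ × G₂).1)).mul_const ((γ₀ : Γ) : G₁ × G₂).1
    simpa [coe_fst_mul, coe_fst_inv] using this
  have h2 := ((π γ₀).continuous.tendsto v).comp (hv _ h1)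
  have h3 : ∀ n, π γ₀ (π (γ₀⁻¹ * γ n * γ₀) v) = π (γ n) (π γ₀ v) := by
    intro n
    rw [← pi_mul_apply, ← pi_mul_apply]
    congr 1
    group
  simpa only [Function.comp_def, h3] using h2


lemma S_sub {v w : H} (hv : v ∈ S π) (hw : w ∈ S π) : v - w ∈ S π := by
  have h := S_add π hv (S_smul π (-1 : ℂ) hw)
  have he : v + (-1 : ℂ) • w = v - w := by
    simp [sub_eq_add_neg]
  rwa [he] at h

noncomputable def Wsub : Submodule ℂ H where
  carrier := S π
  add_mem' := S_add π
  zero_mem' := S_zero π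
  smul_mem' := S_smul π

lemma mem_Wsub {v : H} : v ∈ Wsub π ↔ v ∈ S π := Iff.rfl

section Extension

variable [FirstCountableTopology G₁]
variable (hdense : DenseRange (fun γ : Γ => ((γ : G₁ × G₂).1)))
include hdense

lemma exists_seq (g : G₁) :
    ∃ γ : ℕ → Γ, Tendsto (fun n => ((γ n : G₁ × G₂).1)) atTop (𝓝 g) := by
  have hg : g ∈ closure (Set.range fun γ : Γ => ((γ : G₁ × G₂).1)) := hdense g
  rw [mem_closure_iff_seq_limit] at hg
  obtain ⟨x, hx, hxg⟩ := hg
  choose γ hγ using hx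
  exact ⟨γ, by rwa [show (fun n => ((γ n : G₁ × G₂).1)) = x from funext hγ]⟩

noncomputable def seq (g : G₁) : ℕ → Γ := (exists_seq hdense g).choose

lemma seq_tendsto (g : G₁) :
    Tendsto (fun n => ((seq hdense g n : G₁ × G₂).1)) atTop (𝓝 g) :=
  (exists_seq hdense g).choose_spec

open Classical in
noncomputable def limOp (g : G₁) (v : H) : H :=
  if hv : v ∈ S π then
    (cauchySeq_tendsto_of_complete
      (cauchy_of_tendsto π hv (seq_tendsto hdense g))).choose
  else 0

lemma tendsto_limOp {v : H} (hv : v ∈ S π) {g : G₁} {δ : ℕ → Γ}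
    (hδ : Tendsto (fun n => ((δ n : G₁ × G₂).1)) atTop (𝓝 g)) :
    Tendsto (fun n => π (δ n) v) atTop (𝓝 (limOp π hdense g v)) := by
  have h0 : Tendsto (fun n => π (seq hdense g n) v) atTop (𝓝 (limOp π hdense g v)) := by
    rw [limOp, dif_pos hv]
    exact (cauchySeq_tendsto_of_complete
      (cauchy_of_tendsto π hv (seq_tendsto hdense g))).choose_spec
  exact h0.congr_dist (diff_tendsto π hv (seq_tendsto hdense g) hδ)

lemma limOp_mem {v : H} (hv : v ∈ S π) (g : G₁) : limOp π hdense g v ∈ S π := by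
  intro γ hγ
  set L := limOp π hdense g v with hL
  have hδ := seq_tendsto hdense g
  have hprod : Tendsto (fun n => ((γ n * seq hdense g n : Γ) : G₁ × G₂).1) atTop (𝓝 g) := by
    have := hγ.mul hδ
    simpa [coe_fst_mul] using this
  have h1 : Tendsto (fun n => π (γ n * seq hdense g n) v) atTop (𝓝 L) :=
    tendsto_limOp π hdense hv hprod
  have h2 : Tendsto (fun n => π (seq hdense g n) v) atTop (𝓝 L) :=
    tendsto_limOp π hdense hv hδ
  have h3 : Tendsto (fun n => dist (π (γ n * seq hdense g n) v) (π (γ n) L)) atTop (𝓝 0) := by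
    have heq : ∀ n, dist (π (γ n * seq hdense g n) v) (π (γ n) L)
        = dist (π (seq hdense g n) v) L := by
      intro n
      rw [pi_mul_apply, LinearIsometryEquiv.dist_map]
    simp only [heq]
    exact tendsto_iff_dist_tendsto_zero.mp h2
  exact h1.congr_dist h3

lemma limOp_add {v w : H} (hv : v ∈ S π) (hw : w ∈ S π) (g : G₁) :
    limOp π hdense g (v + w) = limOp π hdense g v + limOp π hdense g w := by
  have h1 := tendsto_limOp π hdense hv (seq_tendsto hdense g)
  have h2 := tendsto_limOp π hdense hw (seq_tendsto hdense g)
  have h3 := tendsto_limOp π hdense (S_add π hv hw) (seq_tendsto hdense g)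
  refine tendsto_nhds_unique h3 ?_
  simpa [map_add] using h1.add h2

lemma limOp_smul (c : ℂ) {v : H} (hv : v ∈ S π) (g : G₁) :
    limOp π hdense g (c • v) = c • limOp π hdense g v := by
  have h1 := tendsto_limOp π hdense hv (seq_tendsto hdense g)
  have h3 := tendsto_limOp π hdense (S_smul π c hv) (seq_tendsto hdense g)
  refine tendsto_nhds_unique h3 ?_
  simpa [map_smul] using h1.const_smul c

lemma limOp_sub {v w : H} (hv : v ∈ S π) (hw : w ∈ S π) (g : G₁) :
    limOp π hdense g (v - w) = limOp π hdense g v - limOp π hdense g w := by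
  have h1 := tendsto_limOp π hdense hv (seq_tendsto hdense g)
  have h2 := tendsto_limOp π hdense hw (seq_tendsto hdense g)
  have h3 := tendsto_limOp π hdense (S_sub π hv hw) (seq_tendsto hdense g)
  refine tendsto_nhds_unique h3 ?_
  simpa [map_sub] using h1.sub h2

lemma limOp_norm {v : H} (hv : v ∈ S π) (g : G₁) :
    ‖limOp π hdense g v‖ = ‖v‖ := by
  have h1 := (tendsto_limOp π hdense hv (seq_tendsto hdense g)).norm
  have h2 : Tendsto (fun n => ‖π (seq hdense g n) v‖) atTop (𝓝 ‖v‖) := by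
    simpa using tendsto_const_nhds (α := ℕ) (x := ‖v‖)
  exact tendsto_nhds_unique h1 h2

lemma limOp_dist {v w : H} (hv : v ∈ S π) (hw : w ∈ S π) (g : G₁) :
    dist (limOp π hdense g v) (limOp π hdense g w) = dist v w := by
  rw [dist_eq_norm, dist_eq_norm, ← limOp_sub π hdense hv hw,
    limOp_norm π hdense (S_sub π hv hw)]

lemma limOp_comp (g h : G₁) {v : H} (hv : v ∈ S π) :
    limOp π hdense (g * h) v = limOp π hdense g (limOp π hdense h v) := by
  have ha := seq_tendsto hdense g
  have hb := seq_tendsto hdense h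
  have hprod : Tendsto
      (fun n => ((seq hdense g n * seq hdense h n : Γ) : G₁ × G₂).1) atTop (𝓝 (g * h)) := by
    have := ha.mul hb
    simpa [coe_fst_mul] using this
  have h1 : Tendsto (fun n => π (seq hdense g n * seq hdense h n) v) atTop
      (𝓝 (limOp π hdense (g * h) v)) := tendsto_limOp π hdense hv hprod
  have h2 := tendsto_limOp π hdense hv hb
  have h3 : Tendsto (fun n => π (seq hdense g n) (limOp π hdense h v)) atTop
      (𝓝 (limOp π hdense g (limOp π hdense h v))) :=
    tendsto_limOp π hdense (limOp_mem π hdense hv h) (seq_tendsto hdense g)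
  have h4 : Tendsto (fun n => dist (π (seq hdense g n * seq hdense h n) v)
      (π (seq hdense g n) (limOp π hdense h v))) atTop (𝓝 0) := by
    have heq : ∀ n, dist (π (seq hdense g n * seq hdense h n) v)
        (π (seq hdense g n) (limOp π hdense h v))
        = dist (π (seq hdense h n) v) (limOp π hdense h v) := by
      intro n
      rw [pi_mul_apply, LinearIsometryEquiv.dist_map]
    simp only [heq]
    exact tendsto_iff_dist_tendsto_zero.mp h2
  exact tendsto_nhds_unique (h1.congr_dist h4) h3

lemma limOp_eq_pi (γ₀ : Γ) {v : H} (hv : v ∈ S π) :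
    limOp π hdense ((γ₀ : G₁ × G₂).1) v = π γ₀ v := by
  have h1 : Tendsto (fun _ : ℕ => ((γ₀ : G₁ × G₂).1)) atTop (𝓝 ((γ₀ : G₁ × G₂).1)) :=
    tendsto_const_nhds
  have h2 := tendsto_limOp π hdense hv (δ := fun _ => γ₀) h1
  exact tendsto_nhds_unique h2 tendsto_const_nhds

lemma limOp_one {v : H} (hv : v ∈ S π) : limOp π hdense 1 v = v := by
  have := limOp_eq_pi π hdense 1 hv
  simpa using this

lemma cont_at_one {v : H} (hv : v ∈ S π) {h : ℕ → G₁} (hh : Tendsto h atTop (𝓝 1)) :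
    Tendsto (fun n => limOp π hdense (h n) v) atTop (𝓝 v) := by
  obtain ⟨U, hU⟩ := (𝓝 (1 : G₁)).exists_antitone_basis
  have hsel : ∀ n : ℕ, ∃ k : ℕ, (h n)⁻¹ * ((seq hdense (h n) k : G₁ × G₂).1) ∈ U n ∧
      dist (π (seq hdense (h n) k) v) (limOp π hdense (h n) v) < 1 / (n + 1) := by
    intro n
    have h1 : Tendsto (fun k => (h n)⁻¹ * ((seq hdense (h n) k : G₁ × G₂).1)) atTop
        (𝓝 1) := by
      have := (seq_tendsto hdense (h n)).const_mul (h n)⁻¹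
      simpa using this
    have e1 : ∀ᶠ k in atTop, (h n)⁻¹ * ((seq hdense (h n) k : G₁ × G₂).1) ∈ U n :=
      h1 (hU.1.mem_of_mem trivial)
    have e2 : ∀ᶠ k in atTop,
        dist (π (seq hdense (h n) k) v) (limOp π hdense (h n) v) < 1 / (n + 1) := by
      have := tendsto_iff_dist_tendsto_zero.mp
        (tendsto_limOp π hdense hv (seq_tendsto hdense (h n)))
      exact this.eventually_lt_const (by positivity)
    exact (e1.and e2).exists
  choose k hk1 hk2 using hsel
  have hι : Tendsto (fun n => ((seq hdense (h n) (k n) : Γ) : G₁ × G₂).1) atTop (𝓝 1) := by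
    have hx : Tendsto (fun n => (h n)⁻¹ * ((seq hdense (h n) (k n) : Γ) : G₁ × G₂).1) atTop
        (𝓝 1) := hU.tendsto hk1
    have := hh.mul hx
    simpa [mul_inv_cancel_left] using this
  have hπ : Tendsto (fun n => π (seq hdense (h n) (k n)) v) atTop (𝓝 v) := hv _ hι
  rw [tendsto_iff_dist_tendsto_zero]
  have hb : ∀ n, dist (limOp π hdense (h n) v) v ≤
      1 / (n + 1) + dist (π (seq hdense (h n) (k n)) v) v := by
    intro n
    have ht := dist_triangle (limOp π hdense (h n) v) (π (seq hdense (h n) (k n)) v) v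
    have h' := hk2 n
    rw [dist_comm] at h'
    linarith
  have hlim : Tendsto (fun n : ℕ => 1 / ((n : ℝ) + 1)
      + dist (π (seq hdense (h n) (k n)) v) v) atTop (𝓝 0) := by
    have := tendsto_one_div_add_atTop_nhds_zero_nat.add
      (tendsto_iff_dist_tendsto_zero.mp hπ)
    simpa using this
  exact squeeze_zero (fun n => dist_nonneg) hb hlim

noncomputable def ρe (g : G₁) : (Wsub π) ≃ₗᵢ[ℂ] (Wsub π) :=
  { toLinearEquiv :=
    { toFun := fun v => ⟨limOp π hdense g v.1, limOp_mem π hdense v.2 g⟩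
      map_add' := fun u v => Subtype.ext (limOp_add π hdense u.2 v.2 g)
      map_smul' := fun c v => Subtype.ext (limOp_smul π hdense c v.2 g)
      invFun := fun v => ⟨limOp π hdense g⁻¹ v.1, limOp_mem π hdense v.2 g⁻¹⟩
      left_inv := fun v => Subtype.ext (by
        simp only
        rw [← limOp_comp π hdense g⁻¹ g v.2, inv_mul_cancel, limOp_one π hdense v.2])
      right_inv := fun v => Subtype.ext (by
        simp only
        rw [← limOp_comp π hdense g g⁻¹ v.2, mul_inv_cancel, limOp_one π hdense v.2]) }
    norm_map' := fun v => limOp_norm π hdense v.2 g }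

lemma ρe_coe (g : G₁) (v : Wsub π) : (ρe π hdense g v : H) = limOp π hdense g v.1 := rfl

noncomputable def ρ : G₁ →* ((Wsub π) ≃ₗᵢ[ℂ] (Wsub π)) where
  toFun := ρe π hdense
  map_one' := by
    refine LinearIsometryEquiv.ext fun v => Subtype.ext ?_
    exact limOp_one π hdense v.2
  map_mul' := fun g h => by
    refine LinearIsometryEquiv.ext fun v => Subtype.ext ?_
    exact limOp_comp π hdense g h v.2

lemma ρ_coe (g : G₁) (v : Wsub π) : ((ρ π hdense g v : Wsub π) : H) = limOp π hdense g v.1 := rfl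

lemma rho_continuous :
    Continuous (fun p : G₁ × (Wsub π) => ((ρ π hdense p.1 p.2 : Wsub π) : H)) := by
  apply SeqContinuous.continuous
  intro x p hx
  have h1 : Tendsto (fun n => (x n).1) atTop (𝓝 p.1) :=
    ((continuous_fst.tendsto p).comp hx)
  have h2 : Tendsto (fun n => (x n).2) atTop (𝓝 p.2) :=
    ((continuous_snd.tendsto p).comp hx)
  rw [tendsto_iff_dist_tendsto_zero]
  have hb : ∀ n, dist ((ρ π hdense (x n).1 (x n).2 : Wsub π) : H)
      ((ρ π hdense p.1 p.2 : Wsub π) : H) ≤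
      dist ((x n).2 : H) (p.2 : H) + dist (limOp π hdense (p.1⁻¹ * (x n).1) (p.2 : H)) (p.2 : H) := by
    intro n
    have t1 : dist ((ρ π hdense (x n).1 (x n).2 : Wsub π) : H)
        ((ρ π hdense (x n).1 p.2 : Wsub π) : H) = dist ((x n).2 : H) (p.2 : H) := by
      rw [ρ_coe, ρ_coe]
      exact limOp_dist π hdense (x n).2.2 p.2.2 (x n).1
    have t2 : dist ((ρ π hdense (x n).1 p.2 : Wsub π) : H)
        ((ρ π hdense p.1 p.2 : Wsub π) : H)
        = dist (limOp π hdense (p.1⁻¹ * (x n).1) (p.2 : H)) (p.2 : H) := by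
      rw [ρ_coe, ρ_coe]
      have e1 : limOp π hdense ((x n).1) (p.2 : H)
          = limOp π hdense p.1 (limOp π hdense (p.1⁻¹ * (x n).1) (p.2 : H)) := by
        rw [← limOp_comp π hdense p.1 (p.1⁻¹ * (x n).1) p.2.2, mul_inv_cancel_left]
      rw [e1]
      exact limOp_dist π hdense (limOp_mem π hdense p.2.2 _) p.2.2 p.1
    have ht := dist_triangle ((ρ π hdense (x n).1 (x n).2 : Wsub π) : H)
      ((ρ π hdense (x n).1 p.2 : Wsub π) : H) ((ρ π hdense p.1 p.2 : Wsub π) : H)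
    rw [t1, t2] at ht
    exact ht
  have c1 : Tendsto (fun n => dist ((x n).2 : H) (p.2 : H)) atTop (𝓝 0) := by
    have := tendsto_iff_dist_tendsto_zero.mp h2
    simpa only [Subtype.dist_eq] using this
  have c2 : Tendsto (fun n => p.1⁻¹ * (x n).1) atTop (𝓝 1) := by
    have := h1.const_mul p.1⁻¹
    simpa using this
  have c3 := tendsto_iff_dist_tendsto_zero.mp (cont_at_one π hdense p.2.2 c2)
  have := c1.add c3
  refine squeeze_zero (fun n => dist_nonneg) hb (by simpa using this)

end Extension

end Stmt14



/-- let Γ be a discrete subgroup (lattice) of a product G₁ × G₂ of lcsc groups,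
with dense projection ι to G₁, and π a unitary representation of Γ on H. Then the set of
ι-continuous vectors is a closed Γ-invariant subspace of H on which the representation of Γ
extends to a continuous unitary representation of G₁. -/
theorem continuity_vectors_closed_invariant_and_extension
    {G₁ G₂ : Type*} [Group G₁] [TopologicalSpace G₁] [IsTopologicalGroup G₁]
    [LocallyCompactSpace G₁] [SecondCountableTopology G₁]
    [Group G₂] [TopologicalSpace G₂] [IsTopologicalGroup G₂]
    [LocallyCompactSpace G₂] [SecondCountableTopology G₂]
    (Γ : Subgroup (G₁ × G₂)) [DiscreteTopology Γ]
    (hdense : DenseRange (fun γ : Γ => ((γ : G₁ × G₂).1)))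
    {H : Type*} [NormedAddCommGroup H] [InnerProductSpace ℂ H] [CompleteSpace H]
    (π : Γ →* (H ≃ₗᵢ[ℂ] H)) :
    ∃ W : Submodule ℂ H,
      (W : Set H) = {v : H | ∀ γ : ℕ → Γ,
          Filter.Tendsto (fun n => ((γ n : G₁ × G₂).1)) Filter.atTop (nhds 1) →
          Filter.Tendsto (fun n => π (γ n) v) Filter.atTop (nhds v)} ∧
      IsClosed (W : Set H) ∧
      (∀ γ : Γ, ∀ v ∈ W, π γ v ∈ W) ∧
      ∃ ρ : G₁ →* (W ≃ₗᵢ[ℂ] W),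
        Continuous (fun p : G₁ × W => (ρ p.1 p.2 : H)) ∧
        ∀ (γ : Γ) (v : W), (ρ ((γ : G₁ × G₂).1) v : H) = π γ (v : H) := by
  
  classical
  refine ⟨Stmt14.Wsub π, rfl, Stmt14.S_closed π,
    fun γ v hv => Stmt14.S_invariant π γ hv, ?_⟩
  exact ⟨Stmt14.ρ π hdense, Stmt14.rho_continuous π hdense,
    fun γ v => Stmt14.limOp_eq_pi π hdense γ v.2⟩
end
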